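/- Let γ : ℝ → (0,∞) be continuous and suppose γ(X) has a continuous (atomless) distribution. Fix constants c > 0, m > 0, r ∈ [0,m], λ ∈ [r,m] and define g(x) := m·𝟙_{γ(x)>c} + r·𝟙_{γ(x)<c} + λ·𝟙_{γ(x)=c}. Then for every sequence (Z_n) of random variables converging to X in distribution, one has ES_p(g(Z_n)) → ES_p(g(X)); i.e. the map Z ↦ ES_p(g(Z)) is continuous at Z = X with respect to convergence in distribution. -/

import Mathlib

open MeasureTheory Filter
open scoped ENNReal Topology Classical

noncomputable def VaR {Ω : Type*} [MeasurableSpace Ω] (P : Measure Ω) (p : ℝ) (Y : Ω → ℝ) : ℝ :=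
  sInf {x : ℝ | p ≤ (P {ω | Y ω ≤ x}).toReal}

noncomputable def ES {Ω : Type*} [MeasurableSpace Ω] (P : Measure Ω) (p : ℝ) (Y : Ω → ℝ) : ℝ :=
  (1 - p)⁻¹ * ∫ u in p..(1 : ℝ), VaR P u Y

/-- The probability space is atomless. -/
def Atomless {Ω : Type*} [MeasurableSpace Ω] (P : Measure Ω) : Prop :=
  ∀ s : Set Ω, MeasurableSet s → 0 < P s →
    ∃ t, t ⊆ s ∧ MeasurableSet t ∧ 0 < P t ∧ P t < P s

/-- The (topological) support of a measure on ℝ. -/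
def msupport (μ : Measure ℝ) : Set ℝ :=
  {x | ∀ ε > 0, 0 < μ (Set.Ioo (x - ε) (x + ε))}

/-- The distribution `μ` has a density (w.r.t. Lebesgue measure) which is positive
on the support of `μ`. -/
def HasPositiveDensityOnSupport (μ : Measure ℝ) : Prop :=
  ∃ f : ℝ → ℝ, Measurable f ∧
    μ = MeasureTheory.volume.withDensity (fun x => ENNReal.ofReal (f x)) ∧
    ∀ x ∈ msupport μ, 0 < f x

/-- The distribution `μ` has a density (w.r.t. Lebesgue measure) which is decreasing
(and positive) on the support of `μ`. -/
def HasDecreasingDensityOnSupport (μ : Measure ℝ) : Prop :=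
  ∃ f : ℝ → ℝ, Measurable f ∧
    μ = MeasureTheory.volume.withDensity (fun x => ENNReal.ofReal (f x)) ∧
    AntitoneOn f (msupport μ) ∧ ∀ x ∈ msupport μ, 0 < f x

/-- Membership in the admissible set 𝒢_cm (complete market): measurable `g` with
budget constraint `𝔼[γ(X)·g(X)] ≥ x₀`. -/
def memGcm {Ω : Type*} [MeasurableSpace Ω] (P : Measure Ω) (X : Ω → ℝ) (γ : ℝ → ℝ)
    (x₀ : ℝ) (g : ℝ → ℝ) : Prop :=
  Measurable g ∧ Integrable (fun ω => γ (X ω) * g (X ω)) P ∧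
    x₀ ≤ ∫ ω, γ (X ω) * g (X ω) ∂P

/-- Membership in the admissible set 𝒢_ns (no short-selling):
`𝔼[γ(X)·g(X)] ≥ x₀` and `0 ≤ g(X) ≤ X` a.s. -/
def memGns {Ω : Type*} [MeasurableSpace Ω] (P : Measure Ω) (X : Ω → ℝ) (γ : ℝ → ℝ)
    (x₀ : ℝ) (g : ℝ → ℝ) : Prop :=
  Measurable g ∧ Integrable (fun ω => γ (X ω) * g (X ω)) P ∧
    x₀ ≤ ∫ ω, γ (X ω) * g (X ω) ∂P ∧
    (∀ᵐ ω ∂P, 0 ≤ g (X ω) ∧ g (X ω) ≤ X ω)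

/-- Membership in the admissible set 𝒢_bd (bounded positions):
`𝔼[γ(X)·g(X)] ≥ x₀` and `0 ≤ g(X) ≤ m` a.s. -/
def memGbd {Ω : Type*} [MeasurableSpace Ω] (P : Measure Ω) (X : Ω → ℝ) (γ : ℝ → ℝ)
    (x₀ m : ℝ) (g : ℝ → ℝ) : Prop :=
  Measurable g ∧ Integrable (fun ω => γ (X ω) * g (X ω)) P ∧
    x₀ ≤ ∫ ω, γ (X ω) * g (X ω) ∂P ∧
    (∀ᵐ ω ∂P, 0 ≤ g (X ω) ∧ g (X ω) ≤ m)

section Aux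

variable {Ω : Type*} [MeasurableSpace Ω]

lemma VaR_threeval (P : Measure Ω) [IsProbabilityMeasure P]
    (W : Ω → ℝ) (c r l m : ℝ) (hrl : r ≤ l) (hlm : l ≤ m)
    (gY : Ω → ℝ) (hgY : ∀ ω, gY ω = if c < W ω then m else if W ω < c then r else l)
    (u : ℝ) (hu0 : 0 < u) (hu1 : u ≤ 1) :
    VaR P u gY = if u ≤ (P {ω | W ω < c}).toReal then r
      else if u ≤ (P {ω | W ω ≤ c}).toReal then l else m := by
  set b : ℝ := (P {ω | W ω < c}).toReal with hb
  set s : ℝ := (P {ω | W ω ≤ c}).toReal with hs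
  have hb0 : 0 ≤ b := ENNReal.toReal_nonneg
  have hbs : b ≤ s := by
    apply ENNReal.toReal_mono (measure_ne_top _ _)
    exact measure_mono fun ω (hω : W ω < c) => le_of_lt hω
  have hs1 : s ≤ 1 := by
    rw [hs]
    have := prob_le_one (μ := P) (s := {ω | W ω ≤ c})
    calc (P {ω | W ω ≤ c}).toReal ≤ (1 : ℝ≥0∞).toReal :=
          ENNReal.toReal_mono (by simp) this
      _ = 1 := by simp
  have hF : ∀ x : ℝ, (P {ω | gY ω ≤ x}).toReal
      = if x < r then 0 else if x < l then b else if x < m then s else 1 := by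
    intro x
    by_cases hxr : x < r
    · have hempty : {ω | gY ω ≤ x} = ∅ := by
        ext ω
        simp only [Set.mem_setOf_eq, Set.mem_empty_iff_false, iff_false, not_le, hgY ω]
        split_ifs <;> linarith
      simp [hempty, hxr]
    · push_neg at hxr
      by_cases hxl : x < l
      · have hset : {ω | gY ω ≤ x} = {ω | W ω < c} := by
          ext ω
          simp only [Set.mem_setOf_eq, hgY ω]
          split_ifs with h1 h2
          · constructor <;> intro h <;> linarith
          · simp [h2, hxr]
          · constructor <;> intro h <;> [skip; linarith]
            · exfalso; linarith
        simp [hset, if_neg (not_lt.mpr hxr), hxl]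
        rfl
      · push_neg at hxl
        by_cases hxm : x < m
        · have hset : {ω | gY ω ≤ x} = {ω | W ω ≤ c} := by
            ext ω
            simp only [Set.mem_setOf_eq, hgY ω]
            split_ifs with h1 h2
            · constructor <;> intro h <;> linarith
            · constructor <;> intro h <;> linarith
            · push_neg at h1
              constructor <;> intro h <;> linarith
          simp [hset, if_neg (not_lt.mpr hxr), if_neg (not_lt.mpr hxl), hxm]
          rfl
        · push_neg at hxm
          have hset : {ω | gY ω ≤ x} = Set.univ := by
            ext ω
            simp only [Set.mem_setOf_eq, Set.mem_univ, iff_true, hgY ω]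
            split_ifs <;> linarith
          simp [hset, if_neg (not_lt.mpr hxr), if_neg (not_lt.mpr hxl),
            if_neg (not_lt.mpr hxm)]
  set F : ℝ → ℝ := fun x => if x < r then 0 else if x < l then b else if x < m then s else 1
    with hFdef
  have hsetrw : {x : ℝ | u ≤ (P {ω | gY ω ≤ x}).toReal} = {x : ℝ | u ≤ F x} := by
    ext x; simp only [Set.mem_setOf_eq, hF x, hFdef]
  have key : ∀ a : ℝ, u ≤ F a → (∀ x : ℝ, u ≤ F x → a ≤ x) →
      sInf {x : ℝ | u ≤ F x} = a := by
    intro a hmem hlb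
    exact le_antisymm (csInf_le ⟨a, fun x hx => hlb x hx⟩ hmem)
      (le_csInf ⟨a, hmem⟩ fun x hx => hlb x hx)
  rw [VaR, hsetrw]
  by_cases hub : u ≤ b
  · rw [if_pos hub]
    apply key
    · simp only [hFdef]
      split_ifs <;> linarith
    · intro x hx
      by_contra hcon
      push_neg at hcon
      simp only [hFdef, if_pos hcon] at hx
      linarith
  · rw [if_neg hub]
    push_neg at hub
    by_cases hus : u ≤ s
    · rw [if_pos hus]
      apply key
      · simp only [hFdef]
        split_ifs <;> linarith
      · intro x hx
        by_contra hcon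
        push_neg at hcon
        simp only [hFdef] at hx
        split_ifs at hx <;> linarith
    · rw [if_neg hus]
      push_neg at hus
      apply key
      · simp only [hFdef]
        split_ifs <;> linarith
      · intro x hx
        by_contra hcon
        push_neg at hcon
        simp only [hFdef] at hx
        split_ifs at hx <;> linarith

lemma ES_threeval (P : Measure Ω) [IsProbabilityMeasure P]
    (W : Ω → ℝ) (c r l m : ℝ) (hrl : r ≤ l) (hlm : l ≤ m)
    (gY : Ω → ℝ) (hgY : ∀ ω, gY ω = if c < W ω then m else if W ω < c then r else l)
    (p : ℝ) (hp : p ∈ Set.Ioo (0:ℝ) 1) :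
    ES P p gY = (1 - p)⁻¹ *
      (r * (max p (P {ω | W ω < c}).toReal - p)
        + l * (max p (P {ω | W ω ≤ c}).toReal - max p (P {ω | W ω < c}).toReal)
        + m * (1 - max p (P {ω | W ω ≤ c}).toReal)) := by
  set b : ℝ := (P {ω | W ω < c}).toReal with hbdef
  set s : ℝ := (P {ω | W ω ≤ c}).toReal with hsdef
  have hbs : b ≤ s := by
    apply ENNReal.toReal_mono (measure_ne_top _ _)
    exact measure_mono fun ω (hω : W ω < c) => le_of_lt hω
  have hs1 : s ≤ 1 := by
    rw [hsdef]
    calc (P {ω | W ω ≤ c}).toReal ≤ (1 : ℝ≥0∞).toReal :=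
          ENNReal.toReal_mono (by simp) (prob_le_one)
      _ = 1 := by simp
  set h : ℝ → ℝ := fun u => if u ≤ b then r else if u ≤ s then l else m with hhdef
  have hmono : Monotone h := by
    intro u v huv
    simp only [hhdef]
    split_ifs <;> linarith
  set b' : ℝ := max p b with hb'
  set s' : ℝ := max p s with hs'
  have hpb' : p ≤ b' := le_max_left _ _
  have hb's' : b' ≤ s' := max_le_max le_rfl hbs
  have hs'1 : s' ≤ 1 := max_le hp.2.le hs1
  have hint : ∫ u in p..(1:ℝ), VaR P u gY = ∫ u in p..(1:ℝ), h u := by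
    apply intervalIntegral.integral_congr
    intro u hu
    rw [Set.uIcc_of_le hp.2.le] at hu
    show VaR P u gY = h u
    rw [VaR_threeval P W c r l m hrl hlm gY hgY u (lt_of_lt_of_le hp.1 hu.1) hu.2]
  have i1 : IntervalIntegrable h MeasureTheory.volume p b' := hmono.intervalIntegrable
  have i2 : IntervalIntegrable h MeasureTheory.volume b' s' := hmono.intervalIntegrable
  have i3 : IntervalIntegrable h MeasureTheory.volume s' 1 := hmono.intervalIntegrable
  have e1 : ∫ u in p..b', h u = (b' - p) * r := by
    rw [intervalIntegral.integral_congr_ae (g := fun _ => r)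
      (Filter.Eventually.of_forall ?_), intervalIntegral.integral_const, smul_eq_mul]
    intro u hu
    rw [Set.uIoc_of_le hpb'] at hu
    have hub : u ≤ b := by
      rcases le_or_gt b p with hbp | hpb
      · exfalso
        have : b' = p := max_eq_left hbp
        rw [this] at hu
        exact absurd hu.2 (not_le.mpr hu.1)
      · have : b' = b := max_eq_right hpb.le
        rw [this] at hu
        exact hu.2
    simp only [hhdef, if_pos hub]
  have e2 : ∫ u in b'..s', h u = (s' - b') * l := by
    rw [intervalIntegral.integral_congr_ae (g := fun _ => l)
      (Filter.Eventually.of_forall ?_), intervalIntegral.integral_const, smul_eq_mul]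
    intro u hu
    rw [Set.uIoc_of_le hb's'] at hu
    have hub : ¬ u ≤ b := by
      push_neg
      calc b ≤ b' := le_max_right _ _
        _ < u := hu.1
    have hus : u ≤ s := by
      rcases le_or_gt s p with hsp | hps
      · exfalso
        have hs'p : s' = p := max_eq_left hsp
        have : u ≤ p := hs'p ▸ hu.2
        have : p < u := lt_of_le_of_lt hpb' hu.1
        linarith
      · have : s' = s := max_eq_right hps.le
        rw [this] at hu
        exact hu.2
    simp only [hhdef, if_neg hub, if_pos hus]
  have e3 : ∫ u in s'..(1:ℝ), h u = (1 - s') * m := by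
    rw [intervalIntegral.integral_congr_ae (g := fun _ => m)
      (Filter.Eventually.of_forall ?_), intervalIntegral.integral_const, smul_eq_mul]
    intro u hu
    rw [Set.uIoc_of_le hs'1] at hu
    have hub : ¬ u ≤ b := by
      push_neg
      calc b ≤ s := hbs
        _ ≤ s' := le_max_right _ _
        _ < u := hu.1
    have hus : ¬ u ≤ s := by
      push_neg
      calc s ≤ s' := le_max_right _ _
        _ < u := hu.1
    simp only [hhdef, if_neg hub, if_neg hus]
  have hsplit : ∫ u in p..(1:ℝ), h u
      = (∫ u in p..b', h u) + (∫ u in b'..s', h u) + (∫ u in s'..(1:ℝ), h u) := by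
    rw [intervalIntegral.integral_add_adjacent_intervals i1 i2,
      intervalIntegral.integral_add_adjacent_intervals (i1.trans i2) i3]
  rw [ES, hint, hsplit, e1, e2, e3]
  ring

end Aux
theorem stmt16 {Ω : Type*} [MeasurableSpace Ω] (P : Measure Ω) [IsProbabilityMeasure P]
    (hPatomless : Atomless P)
    (X : Ω → ℝ) (hXmeas : Measurable X)
    (γ : ℝ → ℝ) (hγcont : Continuous γ) (hγpos : ∀ x, 0 < γ x)
    (hγXatomless : ∀ c : ℝ, P {ω | γ (X ω) = c} = 0)
    (p : ℝ) (hp : p ∈ Set.Ioo (0 : ℝ) 1)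
    (c : ℝ) (hc : 0 < c) (m : ℝ) (hm : 0 < m)
    (r : ℝ) (hr : r ∈ Set.Icc (0 : ℝ) m) (l : ℝ) (hl : l ∈ Set.Icc r m)
    (g : ℝ → ℝ)
    (hg : ∀ x, g x = if c < γ x then m else if γ x < c then r else l)
    (Z : ℕ → Ω → ℝ) (hZmeas : ∀ n, Measurable (Z n))
    (hZconv : ∀ f : BoundedContinuousFunction ℝ ℝ,
      Tendsto (fun n => ∫ ω, f (Z n ω) ∂P) atTop (𝓝 (∫ ω, f (X ω) ∂P))) :
    Tendsto (fun n => ES P p (fun ω => g (Z n ω))) atTop (𝓝 (ES P p (fun ω => g (X ω)))) := by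
  have hrl : r ≤ l := hl.1
  have hlm : l ≤ m := hl.2
  have hγmeas : Measurable γ := hγcont.measurable
  set A : Set ℝ := γ ⁻¹' (Set.Iio c) with hA
  set B : Set ℝ := γ ⁻¹' (Set.Iic c) with hB
  have hAmeas : MeasurableSet A := hγmeas measurableSet_Iio
  have hBmeas : MeasurableSet B := hγmeas measurableSet_Iic
  have hAopen : IsOpen A := isOpen_Iio.preimage hγcont
  have hBclosed : IsClosed B := isClosed_Iic.preimage hγcont
  have hAB : A ⊆ B := fun y (hy : γ y < c) => le_of_lt hy
  haveI hprobn : ∀ n, IsProbabilityMeasure (P.map (Z n)) :=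
    fun n => Measure.isProbabilityMeasure_map (hZmeas n).aemeasurable
  haveI hprobX : IsProbabilityMeasure (P.map X) :=
    Measure.isProbabilityMeasure_map hXmeas.aemeasurable
  set ν : ℕ → ProbabilityMeasure ℝ := fun n => ⟨P.map (Z n), hprobn n⟩ with hν
  set ν' : ProbabilityMeasure ℝ := ⟨P.map X, hprobX⟩ with hν'
  have hνtend : Tendsto ν atTop (𝓝 ν') := by
    rw [MeasureTheory.ProbabilityMeasure.tendsto_iff_forall_integral_tendsto]
    intro f
    have h1 : ∀ n, ∫ x, f x ∂(ν n : Measure ℝ) = ∫ ω, f (Z n ω) ∂P := fun n =>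
      integral_map (hZmeas n).aemeasurable f.continuous.measurable.aestronglyMeasurable
    have h2 : ∫ x, f x ∂(ν' : Measure ℝ) = ∫ ω, f (X ω) ∂P :=
      integral_map hXmeas.aemeasurable f.continuous.measurable.aestronglyMeasurable
    simp only [h1, h2]
    exact hZconv f
  have hcnull : (ν' : Measure ℝ) (γ ⁻¹' {c}) = 0 := by
    have hset : X ⁻¹' (γ ⁻¹' {c}) = {ω | γ (X ω) = c} := by
      ext ω; simp
    show (P.map X) (γ ⁻¹' {c}) = 0
    rw [Measure.map_apply hXmeas (hγmeas (measurableSet_singleton c)), hset]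
    exact hγXatomless c
  have hfrA : (ν' : Measure ℝ) (frontier A) = 0 := by
    refine measure_mono_null ?_ hcnull
    intro x hx
    rw [frontier, hAopen.interior_eq] at hx
    have hcl : closure A ⊆ B := closure_minimal hAB hBclosed
    have h1 : γ x ≤ c := hcl hx.1
    have h2 : ¬ γ x < c := hx.2
    show γ x ∈ ({c} : Set ℝ)
    simp only [Set.mem_singleton_iff]
    linarith [lt_or_eq_of_le h1]
    -- fallback
  have hfrB : (ν' : Measure ℝ) (frontier B) = 0 := by
    refine measure_mono_null ?_ hcnull
    intro x hx
    rw [frontier, hBclosed.closure_eq] at hx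
    have h1 : γ x ≤ c := hx.1
    have h2 : x ∉ A := fun hxA => hx.2 (interior_maximal hAB hAopen hxA)
    have h2' : ¬ γ x < c := h2
    show γ x ∈ ({c} : Set ℝ)
    simp only [Set.mem_singleton_iff]
    linarith [lt_or_eq_of_le h1]
  have htendA := MeasureTheory.ProbabilityMeasure.tendsto_measure_of_null_frontier_of_tendsto'
    hνtend hfrA
  have htendB := MeasureTheory.ProbabilityMeasure.tendsto_measure_of_null_frontier_of_tendsto'
    hνtend hfrB
  have hmapA : ∀ n, (ν n : Measure ℝ) A = P {ω | γ (Z n ω) < c} := by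
    intro n
    show (P.map (Z n)) A = _
    rw [Measure.map_apply (hZmeas n) hAmeas]
    rfl
  have hmapB : ∀ n, (ν n : Measure ℝ) B = P {ω | γ (Z n ω) ≤ c} := by
    intro n
    show (P.map (Z n)) B = _
    rw [Measure.map_apply (hZmeas n) hBmeas]
    rfl
  have hmapAX : (ν' : Measure ℝ) A = P {ω | γ (X ω) < c} := by
    show (P.map X) A = _
    rw [Measure.map_apply hXmeas hAmeas]
    rfl
  have hmapBX : (ν' : Measure ℝ) B = P {ω | γ (X ω) ≤ c} := by
    show (P.map X) B = _
    rw [Measure.map_apply hXmeas hBmeas]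
    rfl
  have hseq : P {ω | γ (X ω) ≤ c} = P {ω | γ (X ω) < c} := by
    apply le_antisymm
    · have hsub : {ω | γ (X ω) ≤ c} ⊆ {ω | γ (X ω) < c} ∪ {ω | γ (X ω) = c} := by
        intro ω hω
        simp only [Set.mem_union, Set.mem_setOf_eq] at *
        exact lt_or_eq_of_le hω
      calc P {ω | γ (X ω) ≤ c} ≤ P ({ω | γ (X ω) < c} ∪ {ω | γ (X ω) = c}) :=
            measure_mono hsub
        _ ≤ P {ω | γ (X ω) < c} + P {ω | γ (X ω) = c} := measure_union_le _ _
        _ = P {ω | γ (X ω) < c} := by rw [hγXatomless c, add_zero]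
    · refine measure_mono fun ω hω => ?_
      simp only [Set.mem_setOf_eq] at *
      exact le_of_lt hω
  set binf : ℝ := (P {ω | γ (X ω) < c}).toReal with hbinf
  have hbt : Tendsto (fun n => (P {ω | γ (Z n ω) < c}).toReal) atTop (𝓝 binf) := by
    have := (ENNReal.tendsto_toReal (measure_ne_top (ν' : Measure ℝ) A)).comp htendA
    simpa only [Function.comp_def, hmapA, hmapAX] using this
  have hst : Tendsto (fun n => (P {ω | γ (Z n ω) ≤ c}).toReal) atTop (𝓝 binf) := by
    have := (ENNReal.tendsto_toReal (measure_ne_top (ν' : Measure ℝ) B)).comp htendB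
    simpa only [Function.comp_def, hmapB, hmapBX, hseq] using this
  have hESn : ∀ n, ES P p (fun ω => g (Z n ω)) = (1 - p)⁻¹ *
      (r * (max p (P {ω | γ (Z n ω) < c}).toReal - p)
        + l * (max p (P {ω | γ (Z n ω) ≤ c}).toReal - max p (P {ω | γ (Z n ω) < c}).toReal)
        + m * (1 - max p (P {ω | γ (Z n ω) ≤ c}).toReal)) := fun n =>
    ES_threeval P (fun ω => γ (Z n ω)) c r l m hrl hlm _ (fun ω => hg (Z n ω)) p hp
  have hESX : ES P p (fun ω => g (X ω)) = (1 - p)⁻¹ *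
      (r * (max p binf - p) + l * (max p binf - max p binf) + m * (1 - max p binf)) := by
    have := ES_threeval P (fun ω => γ (X ω)) c r l m hrl hlm _ (fun ω => hg (X ω)) p hp
    rw [this, hseq]
  simp only [hESn, hESX]
  exact tendsto_const_nhds.mul
    (((tendsto_const_nhds.mul ((tendsto_const_nhds.max hbt).sub tendsto_const_nhds)).add
      (tendsto_const_nhds.mul
        ((tendsto_const_nhds.max hst).sub (tendsto_const_nhds.max hbt)))).add
      (tendsto_const_nhds.mul (tendsto_const_nhds.sub (tendsto_const_nhds.max hst))))
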